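/- Let F be a real n×n matrix with F + Fᵀ positive semidefinite. Then ‖(F + I)⁻¹(F + Fᵀ)(F + I)⁻ᵀ‖ ≤ 1/2, where ‖·‖ is the spectral norm. -/

import Mathlib

open Matrix

noncomputable def specNorm {n : ℕ} (A : Matrix (Fin n) (Fin n) ℝ) : ℝ :=
  ‖Matrix.toEuclideanCLM (𝕜 := ℝ) A‖

theorem stmt1 {n : ℕ} (F : Matrix (Fin n) (Fin n) ℝ)
    (hF : (F + Fᵀ).PosSemidef) :
    specNorm ((F + 1)⁻¹ * (F + Fᵀ) * ((F + 1)⁻¹)ᵀ) ≤ 1 / 2 := by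
  classical
  set G : Matrix (Fin n) (Fin n) ℝ := F + 1 with hGdef
  set S : Matrix (Fin n) (Fin n) ℝ := F + Fᵀ with hSdef
  set B : Matrix (Fin n) (Fin n) ℝ := G⁻¹ with hBdef
  -- G is invertible
  have hdet : IsUnit G.det := by
    rw [isUnit_iff_ne_zero]
    intro h0
    obtain ⟨v, hv, hv0⟩ := (Matrix.exists_mulVec_eq_zero_iff).mpr h0
    have hFv : F *ᵥ v = -v := by
      have := hv0
      rw [hGdef, Matrix.add_mulVec, Matrix.one_mulVec] at this
      linear_combination (norm := module) this
    have h1 := hF.dotProduct_mulVec_nonneg v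
    rw [star_trivial, Matrix.add_mulVec, dotProduct_add, hFv,
      Matrix.dotProduct_mulVec, Matrix.vecMul_transpose, hFv] at h1
    simp only [dotProduct_neg, neg_dotProduct] at h1
    have hnn : 0 ≤ v ⬝ᵥ v := by simpa using dotProduct_self_star_nonneg v
    have hvv : v ⬝ᵥ v = 0 := by linarith
    exact hv (dotProduct_self_eq_zero.mp hvv)
  have hBG : B * G = 1 := Matrix.nonsing_inv_mul G hdet
  -- M and its positive semidefiniteness
  set M : Matrix (Fin n) (Fin n) ℝ := B * S * Bᵀ with hMdef
  have hBt : Bᴴ = Bᵀ := Matrix.conjTranspose_eq_transpose_of_trivial B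
  have hM : M.PosSemidef := by
    have := hF.mul_mul_conjTranspose_same B
    rwa [hBt] at this
  -- the PSD matrix (F-1)(F-1)ᵀ
  have hkeyPSD : ((F - 1) * (F - 1)ᵀ).PosSemidef := by
    have := Matrix.posSemidef_self_mul_conjTranspose (F - 1)
    rwa [Matrix.conjTranspose_eq_transpose_of_trivial] at this
  have halg : (F - 1) * (F - 1)ᵀ = G * Gᵀ - (S + S) := by
    rw [hGdef, hSdef]
    simp only [Matrix.transpose_add, Matrix.transpose_sub, Matrix.transpose_one]
    noncomm_ring
  -- quadratic bound for M
  have key : ∀ y : Fin n → ℝ, y ⬝ᵥ (M *ᵥ y) ≤ (1/2) * (y ⬝ᵥ y) := by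
    intro y
    set z : Fin n → ℝ := Bᵀ *ᵥ y with hz
    have h1 : y ⬝ᵥ (M *ᵥ y) = z ⬝ᵥ (S *ᵥ z) := by
      rw [hMdef, ← Matrix.mulVec_mulVec, ← Matrix.mulVec_mulVec, Matrix.dotProduct_mulVec y B,
        ← Matrix.mulVec_transpose, ← hz]
    have hy : Gᵀ *ᵥ z = y := by
      rw [hz, Matrix.mulVec_mulVec, ← Matrix.transpose_mul, hBG, Matrix.transpose_one,
        Matrix.one_mulVec]
    have h2 : y ⬝ᵥ y = z ⬝ᵥ ((G * Gᵀ) *ᵥ z) := by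
      conv_lhs => rw [← hy]
      rw [Matrix.dotProduct_mulVec, Matrix.vecMul_transpose, Matrix.mulVec_mulVec,
        dotProduct_comm]
    have h3 := hkeyPSD.dotProduct_mulVec_nonneg z
    rw [star_trivial, halg, Matrix.sub_mulVec, dotProduct_sub, Matrix.add_mulVec,
      dotProduct_add] at h3
    rw [h1, h2]
    linarith
  -- square root of M
  set R : Matrix (Fin n) (Fin n) ℝ := (open scoped MatrixOrder in CFC.sqrt M) with hR
  have hRR : R * R = M := by open scoped MatrixOrder in exact CFC.sqrt_mul_sqrt_self M hM.nonneg
  have hRt : Rᵀ = R := by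
    rw [← Matrix.conjTranspose_eq_transpose_of_trivial]
    open scoped MatrixOrder in exact (CFC.sqrt_nonneg M).posSemidef.1
  -- norm of Euclidean vectors via dot product
  have hnorm : ∀ v : Fin n → ℝ,
      ‖(WithLp.equiv 2 (Fin n → ℝ)).symm v‖ ^ 2 = v ⬝ᵥ v := by
    intro v
    rw [← real_inner_self_eq_norm_sq]
    simp only [PiLp.inner_apply, dotProduct]
    simp [sq]
  -- R contracts by sqrt (1/2)
  have hRv : ∀ v : Fin n → ℝ, (R *ᵥ v) ⬝ᵥ (R *ᵥ v) = v ⬝ᵥ (M *ᵥ v) := by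
    intro v
    rw [Matrix.dotProduct_mulVec, ← Matrix.mulVec_transpose, hRt, Matrix.mulVec_mulVec, hRR,
      dotProduct_comm]
  have hRnorm : ∀ v : Fin n → ℝ,
      ‖(WithLp.equiv 2 (Fin n → ℝ)).symm (R *ᵥ v)‖ ≤
        Real.sqrt (1/2) * ‖(WithLp.equiv 2 (Fin n → ℝ)).symm v‖ := by
    intro v
    have hsq : ‖(WithLp.equiv 2 (Fin n → ℝ)).symm (R *ᵥ v)‖ ^ 2 ≤
        (Real.sqrt (1/2) * ‖(WithLp.equiv 2 (Fin n → ℝ)).symm v‖) ^ 2 := by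
      rw [hnorm, hRv, mul_pow, Real.sq_sqrt (by norm_num : (0:ℝ) ≤ 1/2), hnorm]
      exact key v
    exact (pow_le_pow_iff_left₀ (norm_nonneg _) (by positivity) two_ne_zero).mp hsq
  -- conclude
  show ‖Matrix.toEuclideanCLM (𝕜 := ℝ) M‖ ≤ 1 / 2
  refine ContinuousLinearMap.opNorm_le_bound _ (by norm_num) fun x => ?_
  set v : Fin n → ℝ := WithLp.equiv 2 (Fin n → ℝ) x with hv
  have hx : x = (WithLp.equiv 2 (Fin n → ℝ)).symm v := rfl
  have hTx : Matrix.toEuclideanCLM (𝕜 := ℝ) M x =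
      (WithLp.equiv 2 (Fin n → ℝ)).symm (M *ᵥ v) := by
    rw [hx, Matrix.toEuclideanCLM_toLp]
    simp [Matrix.toLin'_apply]
  rw [hTx, hx]
  have hMv : M *ᵥ v = R *ᵥ (R *ᵥ v) := by rw [Matrix.mulVec_mulVec, hRR]
  calc ‖(WithLp.equiv 2 (Fin n → ℝ)).symm (M *ᵥ v)‖
      = ‖(WithLp.equiv 2 (Fin n → ℝ)).symm (R *ᵥ (R *ᵥ v))‖ := by rw [hMv]
    _ ≤ Real.sqrt (1/2) * ‖(WithLp.equiv 2 (Fin n → ℝ)).symm (R *ᵥ v)‖ := hRnorm _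
    _ ≤ Real.sqrt (1/2) * (Real.sqrt (1/2) * ‖(WithLp.equiv 2 (Fin n → ℝ)).symm v‖) := by
        exact mul_le_mul_of_nonneg_left (hRnorm v) (Real.sqrt_nonneg _)
    _ = 1 / 2 * ‖(WithLp.equiv 2 (Fin n → ℝ)).symm v‖ := by
        rw [← mul_assoc, Real.mul_self_sqrt (by norm_num)]
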